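/- Let R be a commutative ring, σ and τ finite types, and n ≥ 0. Let φ : MvPolynomial (σ × τ) R → MvPolynomial (σ ⊕ τ) R be the R-algebra homomorphism sending the variable indexed by (i, j) to X_{inl i} · X_{inr j}. Then φ applied to the complete homogeneous symmetric polynomial h_n in the variables indexed by σ × τ equals ∑_{λ ⊢ n} (rename Sum.inl (h_λ)) · (rename Sum.inr (m_λ)), the sum over all partitions λ of n, where h_λ = ∏_k h_{λ_k} is a product of complete homogeneous symmetric polynomials in the σ-variables and m_λ is the monomial symmetric polynomial in the τ-variables. (This is the identity h_n[XY] = ∑_{λ⊢n} h_λ[X] m_λ[Y].) -/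

import Mathlib

open MvPolynomial

section Aux

open Multiset Finset

variable {σ τ : Type*} [Fintype σ] [Fintype τ] [DecidableEq σ] [DecidableEq τ] {n : ℕ}

private lemma filter_finsum {ι α : Type*} (p : α → Prop) [DecidablePred p]
    (s : Finset ι) (f : ι → Multiset α) :
    Multiset.filter p (∑ i ∈ s, f i) = ∑ i ∈ s, Multiset.filter p (f i) := by
  induction s using Finset.cons_induction with
  | empty => simp
  | cons a s has ih => simp [Finset.sum_cons, Multiset.filter_add, ih]

private lemma map_finsum_aux {ι α β : Type*} (g : α → β) (s : Finset ι) (f : ι → Multiset α) :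
    Multiset.map g (∑ i ∈ s, f i) = ∑ i ∈ s, Multiset.map g (f i) := by
  induction s using Finset.cons_induction with
  | empty => simp
  | cons a s has ih => simp [Finset.sum_cons, ih]

private lemma aux_snd (t : Sym τ n) (f : ∀ j : τ, Sym σ (Multiset.count j t.1)) :
    Multiset.map Prod.snd (∑ j : τ, ((f j : Multiset σ).map (fun i => (i, j)))) = t.1 := by
  ext k
  rw [map_finsum_aux, Multiset.count_sum']
  simp only [Multiset.map_map, Function.comp_def, Multiset.map_const', Multiset.count_replicate,
    (f _).2]
  simp
  exact (f k).2

private def fiberEquiv (t : Sym τ n) :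
    (∀ j : τ, Sym σ (Multiset.count j t.1)) ≃ {s : Sym (σ × τ) n // s.map Prod.snd = t} where
  toFun f := ⟨⟨∑ j : τ, ((f j : Multiset σ).map (fun i => (i, j))), by
      rw [← Multiset.card_map Prod.snd, aux_snd]; exact t.2⟩,
    Sym.ext (by exact aux_snd t f)⟩
  invFun s j := ⟨((s.1.1.filter (fun p => j = p.2)).map Prod.fst), by
      rw [Multiset.card_map, ← Multiset.count_map]
      conv_rhs => rw [← s.2]
      rfl⟩
  left_inv f := by
    funext j
    apply Sym.ext
    show Multiset.map Prod.fst (Multiset.filter _ (∑ k : τ, _)) = _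
    rw [filter_finsum]
    have : ∀ k : τ, Multiset.filter (fun p => j = p.2)
        ((f k : Multiset σ).map (fun i => (i, k))) =
        if j = k then ((f k : Multiset σ).map (fun i => (i, k))) else 0 := by
      intro k
      rw [Multiset.filter_map]
      by_cases h : j = k
      · simp only [Function.comp_def, h, if_true, eq_self_iff_true]
        congr 1
        exact Multiset.filter_eq_self.2 fun a _ => trivial
      · simp only [Function.comp_def, h, if_false]
        rw [Multiset.filter_eq_nil.2 fun a _ hf => hf, Multiset.map_zero]
    simp_rw [this]
    rw [Finset.sum_ite_eq Finset.univ j fun k => ((f k : Multiset σ).map (fun i => (i, k)))]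
    simp [Multiset.map_map, Function.comp_def]
  right_inv s := by
    apply Subtype.ext
    apply Sym.ext
    show (∑ j : τ, Multiset.map (fun i => (i, j)) (Multiset.map Prod.fst _)) = _
    have : ∀ j : τ, Multiset.map (fun i => (i, j))
        (Multiset.map Prod.fst (Multiset.filter (fun p => j = p.2) s.1.1)) =
        Multiset.filter (fun p : σ × τ => j = p.2) s.1.1 := by
      intro j
      rw [Multiset.map_map]
      rw [Multiset.map_congr rfl fun p hp => ?_]
      · exact Multiset.map_id _
      · have := Multiset.of_mem_filter hp
        simp [Function.comp_def, Prod.ext_iff, this.symm]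
    simp_rw [this]
    ext p
    rw [Multiset.count_sum']
    simp only [Multiset.count_filter]
    simp

variable (R : Type*) [CommRing R]

private lemma hsymmPart_ofSym (t : Sym τ n) :
    hsymmPart σ R (Nat.Partition.ofSym t) = ∏ j : τ, hsymm σ R (Multiset.count j t.1) := by
  rw [hsymmPart]
  have hparts : (Nat.Partition.ofSym t).parts = t.1.dedup.map t.1.count := rfl
  rw [hparts, Multiset.map_map]
  have : ((t.1.dedup.map (hsymm σ R ∘ t.1.count))).prod
      = ∏ j ∈ t.1.toFinset, hsymm σ R (Multiset.count j t.1) := by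
    rw [Finset.prod_eq_multiset_prod, Multiset.toFinset_val]
    rfl
  rw [this]
  refine Finset.prod_subset (Finset.subset_univ _) fun j _ hj => ?_
  rw [Multiset.count_eq_zero_of_notMem (by simpa using hj), hsymm_zero]

private lemma fiber_sum (t : Sym τ n) :
    hsymmPart σ R (Nat.Partition.ofSym t) =
      ∑ s : {s : Sym (σ × τ) n // s.map Prod.snd = t},
        ((s.1.1.map Prod.fst).map (X : σ → MvPolynomial σ R)).prod := by
  rw [hsymmPart_ofSym]
  simp only [hsymm]
  rw [Finset.prod_univ_sum, Fintype.piFinset_univ]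
  apply Fintype.sum_equiv (fiberEquiv t)
  intro f
  show _ = ((Multiset.map Prod.fst (∑ j : τ, _)).map X).prod
  rw [map_finsum_aux, map_finsum_aux, Multiset.prod_sum]
  refine Finset.prod_congr rfl fun j _ => ?_
  simp [Multiset.map_map, Function.comp_def]

end Aux

/-- The multiplication formula `h_n[XY] = ∑_{λ⊢n} h_λ[X] m_λ[Y]`: applying the `R`-algebra
homomorphism sending the variable `(i, j)` to `X (inl i) * X (inr j)` to the complete
homogeneous symmetric polynomial `h_n` in the variables `σ × τ` yields the sum over
partitions `λ` of `n` of `h_λ` in the `σ`-variables times the monomial symmetric polynomial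
`m_λ` in the `τ`-variables. -/
theorem hsymm_prod_vars (R : Type*) [CommRing R] (σ τ : Type*) [Fintype σ] [Fintype τ]
    [DecidableEq σ] [DecidableEq τ] (n : ℕ) :
    (aeval fun p : σ × τ => (X (Sum.inl p.1) * X (Sum.inr p.2) : MvPolynomial (σ ⊕ τ) R))
        (hsymm (σ × τ) R n) =
      ∑ μ : n.Partition,
        rename Sum.inl (hsymmPart σ R μ) * rename Sum.inr (msymm τ R μ) := by
  have hrhs : (∑ μ : n.Partition,
        rename Sum.inl (hsymmPart σ R μ) * rename (Sum.inr : τ → σ ⊕ τ) (msymm τ R μ))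
      = ∑ t : Sym τ n, rename Sum.inl (hsymmPart σ R (Nat.Partition.ofSym t)) *
          rename (Sum.inr : τ → σ ⊕ τ) ((t.1.map X).prod) := by
    rw [← Fintype.sum_fiberwise (fun t : Sym τ n => Nat.Partition.ofSym t)
      (fun t => rename Sum.inl (hsymmPart σ R (Nat.Partition.ofSym t)) *
          rename (Sum.inr : τ → σ ⊕ τ) ((t.1.map X).prod))]
    refine Finset.sum_congr rfl fun μ _ => ?_
    rw [msymm, map_sum, Finset.mul_sum]
    refine Finset.sum_congr rfl fun t _ => ?_
    rw [t.2]
  rw [hrhs, hsymm, map_sum]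
  rw [← Fintype.sum_fiberwise (fun s : Sym (σ × τ) n => s.map Prod.snd)]
  refine Finset.sum_congr rfl fun t _ => ?_
  have hB : ∀ s : {s : Sym (σ × τ) n // s.map Prod.snd = t},
      (s.1.1.map fun p : σ × τ => (X (Sum.inr p.2) : MvPolynomial (σ ⊕ τ) R)).prod
        = rename (Sum.inr : τ → σ ⊕ τ) ((t.1.map X).prod) := by
    intro s
    rw [map_multiset_prod, Multiset.map_map]
    have : t.1 = s.1.1.map Prod.snd := (congrArg Subtype.val s.2).symm
    rw [this, Multiset.map_map]
    simp [Function.comp_def]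
  calc ∑ s : {s : Sym (σ × τ) n // s.map Prod.snd = t},
        (aeval fun p : σ × τ => (X (Sum.inl p.1) * X (Sum.inr p.2) : MvPolynomial (σ ⊕ τ) R))
          ((s.1.1.map X).prod)
      = ∑ s : {s : Sym (σ × τ) n // s.map Prod.snd = t},
          rename (Sum.inl : σ → σ ⊕ τ) (((s.1.1.map Prod.fst).map X).prod) *
            rename (Sum.inr : τ → σ ⊕ τ) ((t.1.map X).prod) := by
        refine Finset.sum_congr rfl fun s _ => ?_
        rw [map_multiset_prod, Multiset.map_map]
        simp only [Function.comp_def, aeval_X]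
        rw [Multiset.prod_map_mul, ← hB s]
        congr 1
        rw [map_multiset_prod, Multiset.map_map, Multiset.map_map]
        simp [Function.comp_def]
    _ = _ := by
        rw [← Finset.sum_mul, ← map_sum, ← fiber_sum]
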